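/- Let c₁, …, c₆ ∈ ℂ satisfy c₁c₄ = c₂c₃ and c₄c₅ = c₂c₆, and let f = c₁ + c₂x + c₃y + c₄xy + c₅z + c₆yz ∈ ℂ[x,y,z]. Then c₄·f = (c₂ + c₄y)(c₃ + c₄x + c₆z) as polynomials. Moreover, if c₄ ≠ 0, then every point (x,y,z) ∈ ℂ³ satisfying c₂ + c₄y = 0 and c₃ + c₄x + c₆z = 0 is a singular point of f (f and all three first-order partial derivatives of f vanish there), and the set of such points is infinite; in particular f has non-isolated singularities. (This is the elimination of polytope family 9 in Proposition 4.5.) -/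

import Mathlib

open MvPolynomial

/-- A point `p ∈ ℂ³` is a singular point of `f ∈ ℂ[x,y,z]` if `f` and all three
first-order partial derivatives of `f` vanish at `p`. -/
def IsSingularPoint (f : MvPolynomial (Fin 3) ℂ) (p : Fin 3 → ℂ) : Prop :=
  eval p f = 0 ∧ ∀ i : Fin 3, eval p (pderiv i f) = 0

/-- The elimination of polytope family 9 in Proposition 4.5: if `c₁c₄ = c₂c₃` and
`c₄c₅ = c₂c₆`, then `c₄·f` factors as `(c₂ + c₄y)(c₃ + c₄x + c₆z)`, and when `c₄ ≠ 0`
every point with `c₂ + c₄y = 0` and `c₃ + c₄x + c₆z = 0` is a singular point of `f`;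
the set of such points is infinite, so `f` has non-isolated singularities. -/
theorem stmt_8 (c₁ c₂ c₃ c₄ c₅ c₆ : ℂ) (h1 : c₁ * c₄ = c₂ * c₃) (h2 : c₄ * c₅ = c₂ * c₆) :
    C c₄ * (C c₁ + C c₂ * X 0 + C c₃ * X 1 + C c₄ * X 0 * X 1 + C c₅ * X 2 +
        C c₆ * X 1 * X 2 : MvPolynomial (Fin 3) ℂ) =
      (C c₂ + C c₄ * X 1) * (C c₃ + C c₄ * X 0 + C c₆ * X 2) ∧
    (c₄ ≠ 0 →
      (∀ p : Fin 3 → ℂ, c₂ + c₄ * p 1 = 0 → c₃ + c₄ * p 0 + c₆ * p 2 = 0 →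
        IsSingularPoint (C c₁ + C c₂ * X 0 + C c₃ * X 1 + C c₄ * X 0 * X 1 + C c₅ * X 2 +
          C c₆ * X 1 * X 2) p) ∧
      {p : Fin 3 → ℂ | c₂ + c₄ * p 1 = 0 ∧ c₃ + c₄ * p 0 + c₆ * p 2 = 0}.Infinite ∧
      {p : Fin 3 → ℂ | IsSingularPoint (C c₁ + C c₂ * X 0 + C c₃ * X 1 + C c₄ * X 0 * X 1 +
          C c₅ * X 2 + C c₆ * X 1 * X 2) p}.Infinite) := by
  have hC1 : (C c₁ * C c₄ : MvPolynomial (Fin 3) ℂ) = C c₂ * C c₃ := by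
    rw [← C_mul, ← C_mul, h1]
  have hC2 : (C c₄ * C c₅ : MvPolynomial (Fin 3) ℂ) = C c₂ * C c₆ := by
    rw [← C_mul, ← C_mul, h2]
  have hsing : ∀ (hc4 : c₄ ≠ 0) (p : Fin 3 → ℂ), c₂ + c₄ * p 1 = 0 →
      c₃ + c₄ * p 0 + c₆ * p 2 = 0 →
      IsSingularPoint (C c₁ + C c₂ * X 0 + C c₃ * X 1 + C c₄ * X 0 * X 1 + C c₅ * X 2 +
        C c₆ * X 1 * X 2) p := by
    intro hc4 p hy hz
    constructor
    · have h : c₄ * (c₁ + c₂ * p 0 + c₃ * p 1 + c₄ * (p 0 * p 1) + c₅ * p 2 +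
          c₆ * (p 1 * p 2)) = 0 := by
        linear_combination (c₃ + c₄ * p 0 + c₆ * p 2) * hy + h1 + p 2 * h2
      have := (mul_eq_zero.mp h).resolve_left hc4
      simpa [mul_assoc] using this
    · intro i
      fin_cases i <;>
        simp [pderiv_X, Pi.single_apply] <;>
        [ (have h : c₂ + c₄ * p 1 = 0 := hy; linear_combination hy);
          (linear_combination hz);
          (exact mul_left_cancel₀ hc4 (by linear_combination h2 + c₆ * hy)) ]
  refine ⟨by linear_combination hC1 + X 2 * hC2, fun hc4 => ⟨hsing hc4, ?_, ?_⟩⟩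
  · have hinj : Function.Injective
        (fun t : ℂ => (![(-c₃ - c₆ * t) / c₄, -c₂ / c₄, t] : Fin 3 → ℂ)) := by
      intro a b hab
      have := congrFun hab 2
      simpa using this
    apply Set.infinite_of_injective_forall_mem hinj
    intro t
    constructor
    · simp only [Matrix.cons_val_zero, Matrix.cons_val_one, Matrix.cons_val_two, Matrix.head_cons, Matrix.tail_cons]
      field_simp
      ring
    · simp only [Matrix.cons_val_zero, Matrix.cons_val_one, Matrix.cons_val_two, Matrix.head_cons, Matrix.tail_cons]
      field_simp
      ring
  · have hinj : Function.Injective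
        (fun t : ℂ => (![(-c₃ - c₆ * t) / c₄, -c₂ / c₄, t] : Fin 3 → ℂ)) := by
      intro a b hab
      have := congrFun hab 2
      simpa using this
    apply Set.infinite_of_injective_forall_mem hinj
    intro t
    apply hsing hc4
    · simp only [Matrix.cons_val_zero, Matrix.cons_val_one, Matrix.cons_val_two, Matrix.head_cons, Matrix.tail_cons]
      field_simp
      ring
    · simp only [Matrix.cons_val_zero, Matrix.cons_val_one, Matrix.cons_val_two, Matrix.head_cons, Matrix.tail_cons]
      field_simp
      ring
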